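/- Let k be a field, d ≥ 2, 1 ≤ m < d, and let α, β ∈ k with α ≠ 0. Then there exists a nonzero multivariable polynomial F ∈ MvPolynomial (Fin (d−1)) k such that for every monic polynomial p ∈ k[X] with natDegree p = d and constant coefficient p.coeff 0 = β which admits a factorization p = q * r with q monic, natDegree q = m, and q.coeff 0 = α, one has F evaluated at the tuple (p.coeff 1, p.coeff 2, …, p.coeff (d−1)) equal to 0. In other words, the set of such polynomials, identified with points of k^{d−1} via their non-constant, non-leading coefficients, is contained in an affine hypersurface. -/

import Mathlib

open MvPolynomial

/-- Any `n` polynomials of total degree at most `2` in `s < n` variables over a field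
satisfy a nontrivial polynomial relation. -/
lemma stmt5_aux {k : Type*} [Field k] (n s : ℕ) (hns : s < n)
    (c : Fin n → MvPolynomial (Fin s) k) (hc : ∀ i, (c i).totalDegree ≤ 2) :
    ∃ F : MvPolynomial (Fin n) k, F ≠ 0 ∧ MvPolynomial.aeval c F = 0 := by
  have hn : 1 ≤ n := by omega
  set N : ℕ := (3 * n) ^ s + 1 with hN
  have hN1 : 1 ≤ N := by omega
  set M : ℕ := 2 * n * N with hM
  set W := MvPolynomial.restrictTotalDegree (Fin s) k M with hW
  have hmem : ∀ e : Fin n → Fin N, (∏ i, c i ^ (e i : ℕ)) ∈ W := by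
    intro e
    rw [hW, MvPolynomial.mem_restrictTotalDegree]
    calc (∏ i, c i ^ (e i : ℕ)).totalDegree
        ≤ ∑ i, (c i ^ (e i : ℕ)).totalDegree :=
          MvPolynomial.totalDegree_finset_prod _ _
      _ ≤ ∑ _i : Fin n, N * 2 := by
          refine Finset.sum_le_sum fun i _ => ?_
          refine (MvPolynomial.totalDegree_pow _ _).trans ?_
          have h1 : (e i : ℕ) ≤ N := (e i).isLt.le
          exact Nat.mul_le_mul h1 (hc i)
      _ = M := by simp [hM]; ring
  set v : (Fin n → Fin N) → W := fun e => ⟨∏ i, c i ^ (e i : ℕ), hmem e⟩ with hv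
  have hnotli : ¬ LinearIndependent k v := by
    intro h
    have h1 : Fintype.card (Fin n → Fin N) ≤ Module.finrank k W :=
      h.fintype_card_le_finrank
    -- bound the finrank of W
    set Sset : Set (Fin s →₀ ℕ) := {d | (d.sum fun _ e => e) ≤ M} with hSset
    have hinj : Function.Injective
        (fun (d : Sset) (i : Fin s) => (⟨d.1 i, by
          have hd := d.2
          simp only [hSset, Set.mem_setOf_eq] at hd
          have : d.1 i ≤ d.1.sum fun _ e => e := by
            by_cases h0 : d.1 i = 0
            · simp [h0]
            · exact Finset.single_le_sum (fun _ _ => Nat.zero_le _)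
                (Finsupp.mem_support_iff.mpr h0)
          omega⟩ : Fin (M + 1))) := by
      intro d₁ d₂ hdd
      ext i
      have := congrFun hdd i
      simpa using congrArg Fin.val this
    haveI : Fintype Sset := Fintype.ofInjective _ hinj
    have h2 : Module.finrank k W = Fintype.card Sset := by
      rw [hW]
      exact Module.finrank_eq_card_basis (MvPolynomial.basisRestrictSupport k _)
    have h3 : Fintype.card Sset ≤ (M + 1) ^ s := by
      have := Fintype.card_le_of_injective _ hinj
      simpa using this
    have h4 : Fintype.card (Fin n → Fin N) = N ^ n := by simp
    -- counting: (M+1)^s < N^n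
    have h5 : (M + 1) ^ s < N ^ n := by
      have hb : M + 1 ≤ 3 * n * N := by
        have : 1 ≤ n * N := Nat.one_le_iff_ne_zero.mpr (by positivity)
        calc M + 1 = 2 * (n * N) + 1 := by rw [hM]; ring_nf
          _ ≤ 2 * (n * N) + n * N := by omega
          _ = 3 * n * N := by ring
      calc (M + 1) ^ s ≤ (3 * n * N) ^ s := Nat.pow_le_pow_left hb s
        _ = (3 * n) ^ s * N ^ s := by rw [mul_pow]
        _ < N * N ^ s := by
            have : (3 * n) ^ s < N := by omega
            exact Nat.mul_lt_mul_of_lt_of_le this le_rfl (by positivity)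
        _ = N ^ (s + 1) := by rw [pow_succ]; ring
        _ ≤ N ^ n := Nat.pow_le_pow_right hN1 (by omega)
    omega
  obtain ⟨g, hsum, e₀, hg0⟩ := Fintype.not_linearIndependent_iff.mp hnotli
  have hsum' : ∑ e : Fin n → Fin N, g e • ∏ i, c i ^ (e i : ℕ) = 0 := by
    have := congrArg (Subtype.val) hsum
    simpa [hv] using this
  set E : (Fin n → Fin N) → (Fin n →₀ ℕ) :=
    fun e => Finsupp.equivFunOnFinite.symm (fun i => (e i : ℕ)) with hE
  have hEinj : Function.Injective E := by
    intro e₁ e₂ hee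
    funext i
    have := congrArg (fun f => Finsupp.equivFunOnFinite f i) hee
    simp only [hE, Equiv.apply_symm_apply] at this
    exact Fin.val_injective this
  refine ⟨∑ e : Fin n → Fin N, MvPolynomial.monomial (E e) (g e), ?_, ?_⟩
  · intro hF
    have hcoeff := congrArg (MvPolynomial.coeff (E e₀)) hF
    rw [MvPolynomial.coeff_sum] at hcoeff
    simp only [MvPolynomial.coeff_monomial, MvPolynomial.coeff_zero] at hcoeff
    rw [Finset.sum_eq_single e₀] at hcoeff
    · rw [if_pos rfl] at hcoeff
      exact hg0 hcoeff
    · intro e _ hee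
      exact if_neg (fun hc => hee (hEinj hc))
    · intro h; exact absurd (Finset.mem_univ e₀) h
  · rw [map_sum]
    rw [← hsum']
    refine Finset.sum_congr rfl fun e _ => ?_
    have hEe : ∀ i, E e i = (e i : ℕ) := fun i => rfl
    rw [MvPolynomial.aeval_monomial, Finsupp.prod_pow, Algebra.smul_def]
    congr 1

/-- the monic degree-`d` polynomials with constant coefficient
`β` admitting a monic degree-`m` factor with constant coefficient `α ≠ 0` lie
on an affine hypersurface of `k^{d-1}` (coordinates: the coefficients of
`X, …, X^{d-1}`). -/
theorem stmt5 {k : Type*} [Field k] (d m : ℕ) (hd : 2 ≤ d)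
    (hm1 : 1 ≤ m) (hmd : m < d) (α β : k) (hα : α ≠ 0) :
    ∃ F : MvPolynomial (Fin (d - 1)) k, F ≠ 0 ∧
      ∀ p q r : Polynomial k,
        p.Monic → p.natDegree = d → p.coeff 0 = β →
        q.Monic → q.natDegree = m → q.coeff 0 = α →
        p = q * r →
        MvPolynomial.eval (fun i : Fin (d - 1) => p.coeff (i.val + 1)) F = 0 := by
  classical
  -- coefficient polynomials of a product of a generic monic degree-m and degree-(d-m) poly
  obtain ⟨Q, hQdef⟩ : ∃ Q : ℕ → MvPolynomial (Fin (d - 2)) k, ∀ j,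
      Q j = if hj : 1 ≤ j ∧ j ≤ m - 1 then MvPolynomial.X (⟨j - 1, by omega⟩ : Fin (d - 2))
        else if j = 0 then MvPolynomial.C α else if j = m then 1 else 0 :=
    ⟨_, fun _ => rfl⟩
  obtain ⟨Rb, hRdef⟩ : ∃ Rb : ℕ → MvPolynomial (Fin (d - 2)) k, ∀ j,
      Rb j = if hj : 1 ≤ j ∧ j ≤ d - m - 1 then
          MvPolynomial.X (⟨m - 1 + (j - 1), by omega⟩ : Fin (d - 2))
        else if j = 0 then MvPolynomial.C (β / α) else if j = d - m then 1 else 0 :=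
    ⟨_, fun _ => rfl⟩
  have hQdeg : ∀ j, (Q j).totalDegree ≤ 1 := by
    intro j
    rw [hQdef]
    split_ifs with h1 h2 h3
    · simp [MvPolynomial.totalDegree_X]
    · simp [MvPolynomial.totalDegree_C]
    · simp [MvPolynomial.totalDegree_one]
    · simp [MvPolynomial.totalDegree_zero]
  have hRdeg : ∀ j, (Rb j).totalDegree ≤ 1 := by
    intro j
    rw [hRdef]
    split_ifs with h1 h2 h3
    · simp [MvPolynomial.totalDegree_X]
    · simp [MvPolynomial.totalDegree_C]
    · simp [MvPolynomial.totalDegree_one]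
    · simp [MvPolynomial.totalDegree_zero]
  obtain ⟨c, hcdef⟩ : ∃ c : Fin (d - 1) → MvPolynomial (Fin (d - 2)) k, ∀ i,
      c i = ∑ ab ∈ Finset.HasAntidiagonal.antidiagonal ((i : ℕ) + 1), Q ab.1 * Rb ab.2 :=
    ⟨_, fun _ => rfl⟩
  have hcdeg : ∀ i, (c i).totalDegree ≤ 2 := by
    intro i
    rw [hcdef]
    refine (MvPolynomial.totalDegree_finset_sum _ _).trans (Finset.sup_le fun ab _ => ?_)
    refine (MvPolynomial.totalDegree_mul _ _).trans ?_
    have := hQdeg ab.1; have := hRdeg ab.2; omega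
  obtain ⟨F, hF0, hFc⟩ := stmt5_aux (d - 1) (d - 2) (by omega) c hcdeg
  refine ⟨F, hF0, ?_⟩
  intro p q r hpm hpd hpc hqm hqd hqc hpqr
  have hq0 : q ≠ 0 := hqm.ne_zero
  have hp0 : p ≠ 0 := hpm.ne_zero
  have hr0 : r ≠ 0 := fun h => hp0 (by simp [hpqr, h])
  have hrm : r.Monic := hqm.of_mul_monic_left (hpqr ▸ hpm)
  have hrd : r.natDegree = d - m := by
    have h := Polynomial.natDegree_mul hq0 hr0
    rw [← hpqr, hpd, hqd] at h
    omega
  have hrc : r.coeff 0 = β / α := by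
    have h := congrArg (fun t => Polynomial.coeff t 0) hpqr
    simp only [Polynomial.mul_coeff_zero, hqc, hpc] at h
    rw [eq_div_iff hα, mul_comm]
    exact h.symm
  -- the evaluation point
  obtain ⟨v, hvdef⟩ : ∃ v : Fin (d - 2) → k, ∀ j : Fin (d - 2),
      v j = if (j : ℕ) < m - 1 then q.coeff ((j : ℕ) + 1)
        else r.coeff ((j : ℕ) - (m - 1) + 1) := ⟨_, fun _ => rfl⟩
  have hQev : ∀ j, MvPolynomial.eval v (Q j) = q.coeff j := by
    intro j
    rw [hQdef]
    split_ifs with h1 h2 h3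
    · rw [MvPolynomial.eval_X, hvdef]
      rw [if_pos (show ((⟨j - 1, by omega⟩ : Fin (d - 2)) : ℕ) < m - 1 by
        simp only [Fin.val_mk]; omega)]
      simp only [Fin.val_mk]
      congr 1
      omega
    · subst h2; simp [hqc]
    · subst h3
      simp only [map_one]
      rw [← hqd]
      exact (hqm.coeff_natDegree).symm
    · rw [map_zero]
      exact (Polynomial.coeff_eq_zero_of_natDegree_lt (by omega)).symm
  have hRev : ∀ j, MvPolynomial.eval v (Rb j) = r.coeff j := by
    intro j
    rw [hRdef]
    split_ifs with h1 h2 h3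
    · rw [MvPolynomial.eval_X, hvdef]
      rw [if_neg (show ¬ ((⟨m - 1 + (j - 1), by omega⟩ : Fin (d - 2)) : ℕ) < m - 1 by
        simp only [Fin.val_mk]; omega)]
      simp only [Fin.val_mk]
      congr 1
      omega
    · subst h2; simp [hrc]
    · subst h3
      simp only [map_one]
      rw [← hrd]
      exact (hrm.coeff_natDegree).symm
    · rw [map_zero]
      exact (Polynomial.coeff_eq_zero_of_natDegree_lt (by omega)).symm
  have hcev : ∀ i : Fin (d - 1), MvPolynomial.eval v (c i) = p.coeff ((i : ℕ) + 1) := by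
    intro i
    rw [hcdef, map_sum, hpqr, Polynomial.coeff_mul]
    exact Finset.sum_congr rfl fun ab _ => by rw [map_mul, hQev, hRev]
  -- conclude via composition of evaluations
  have keval : ∀ {σ : Type} [Fintype σ] (w : σ → k) (G : MvPolynomial σ k),
      MvPolynomial.aeval w G = MvPolynomial.eval w G := by
    intro σ _ w G
    rw [MvPolynomial.aeval_def, MvPolynomial.eval, Algebra.algebraMap_self]
    rfl
  have hpt : (fun i : Fin (d - 1) => p.coeff ((i : ℕ) + 1))
      = fun i => MvPolynomial.aeval v (c i) := by
    funext i
    rw [keval, hcev]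
  rw [hpt, ← keval]
  have hcomp := congrArg (fun (φ : MvPolynomial (Fin (d - 1)) k →ₐ[k] k) => φ F)
    (MvPolynomial.comp_aeval (f := c) (φ := MvPolynomial.aeval v))
  simp only [AlgHom.comp_apply] at hcomp
  rw [← hcomp, hFc, map_zero]
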